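/- Let M be an Orlicz function and 1 ≤ p < ∞. Then ℓ_p(M) = { real sequences x = (x_k)_{k≥1} : there exists ρ > 0 with Σ_{k=1}^∞ (M(|x_k|/ρ))^p < ∞ } is a complete metric space with respect to the metric η₃(x,y) = inf{ ρ > 0 : (Σ_{k=1}^∞ (M(|x_k − y_k|/ρ))^p)^{1/p} ≤ 1 }. -/

import Mathlib

/-!
Statement 5 (Paper: Lemma 2.2(iii)).  `ℓ_p(M)` is a complete metric space with
respect to the metric `η₃`.  Sequences are indexed so that `x k` represents
the paper's `x_{k+1}`.
-/

open scoped ENNReal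

/-- An Orlicz function. -/
def IsOrliczFunction (M : ℝ → ℝ) : Prop :=
  ContinuousOn M (Set.Ici 0) ∧ MonotoneOn M (Set.Ici 0) ∧ ConvexOn ℝ (Set.Ici 0) M ∧
    M 0 = 0 ∧ (∀ x : ℝ, 0 < x → 0 < M x) ∧ Filter.Tendsto M Filter.atTop Filter.atTop

/-- `∑_{k=1}^∞ (M (|x_k| / ρ))^p`, valued in `ℝ≥0∞`. -/
noncomputable def lpSum (M : ℝ → ℝ) (p : ℝ) (x : ℕ → ℝ) (ρ : ℝ) : ℝ≥0∞ :=
  ∑' k : ℕ, ENNReal.ofReal (M (|x k| / ρ)) ^ p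

/-- The space `ℓ_p(M)`. -/
def lpM (M : ℝ → ℝ) (p : ℝ) : Set (ℕ → ℝ) :=
  {x | ∃ ρ > 0, lpSum M p x ρ < ⊤}

/-- The metric `η₃`. -/
noncomputable def eta3 (M : ℝ → ℝ) (p : ℝ) (x y : ℕ → ℝ) : ℝ :=
  sInf {ρ : ℝ | 0 < ρ ∧ (lpSum M p (fun k => x k - y k) ρ) ^ (1 / p) ≤ 1}

namespace LpCompleteAux

open Filter MeasureTheory Topology

variable {M : ℝ → ℝ} {p : ℝ}

lemma M_nonneg (hM : IsOrliczFunction M) {t : ℝ} (ht : 0 ≤ t) : 0 ≤ M t := by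
  obtain ⟨_, hmono, _, h0, _, _⟩ := hM
  have := hmono (Set.mem_Ici.2 le_rfl) (Set.mem_Ici.2 ht) ht
  simpa [h0] using this

/-- The admissible set of scales. -/
def S (M : ℝ → ℝ) (p : ℝ) (u : ℕ → ℝ) : Set ℝ :=
  {ρ : ℝ | 0 < ρ ∧ (lpSum M p u ρ) ^ (1 / p) ≤ 1}

lemma eta3_eq (x y : ℕ → ℝ) : eta3 M p x y = sInf (S M p (fun k => x k - y k)) := rfl

lemma mem_S_iff (hp0 : 0 < p) {u : ℕ → ℝ} {ρ : ℝ} :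
    ρ ∈ S M p u ↔ 0 < ρ ∧ lpSum M p u ρ ≤ 1 := by
  unfold S
  rw [Set.mem_setOf_eq, one_div, ENNReal.rpow_inv_le_iff hp0, ENNReal.one_rpow]

lemma S_bddBelow (u : ℕ → ℝ) : BddBelow (S M p u) :=
  ⟨0, fun ρ hρ => le_of_lt hρ.1⟩

lemma lpSum_mono (hM : IsOrliczFunction M) (hp0 : 0 < p) (u : ℕ → ℝ) {ρ₁ ρ₂ : ℝ}
    (h₁ : 0 < ρ₁) (h : ρ₁ ≤ ρ₂) : lpSum M p u ρ₂ ≤ lpSum M p u ρ₁ := by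
  have h₂ : (0:ℝ) < ρ₂ := lt_of_lt_of_le h₁ h
  refine ENNReal.tsum_le_tsum fun k => ?_
  refine ENNReal.rpow_le_rpow (ENNReal.ofReal_le_ofReal ?_) hp0.le
  have harg : |u k| / ρ₂ ≤ |u k| / ρ₁ := by gcongr
  exact hM.2.1 (Set.mem_Ici.2 (by positivity)) (Set.mem_Ici.2 (by positivity)) harg

lemma conv_term (hM : IsOrliczFunction M) {a b ρ₁ ρ₂ : ℝ} (ha : 0 ≤ a) (hb : 0 ≤ b)
    (h₁ : 0 < ρ₁) (h₂ : 0 < ρ₂) :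
    M ((a + b) / (ρ₁ + ρ₂)) ≤ ρ₁ / (ρ₁ + ρ₂) * M (a / ρ₁) + ρ₂ / (ρ₁ + ρ₂) * M (b / ρ₂) := by
  have hρ : 0 < ρ₁ + ρ₂ := by linarith
  have h := hM.2.2.1.2 (Set.mem_Ici.2 (by positivity : (0:ℝ) ≤ a / ρ₁))
    (Set.mem_Ici.2 (by positivity : (0:ℝ) ≤ b / ρ₂))
    (by positivity : (0:ℝ) ≤ ρ₁ / (ρ₁ + ρ₂)) (by positivity : (0:ℝ) ≤ ρ₂ / (ρ₁ + ρ₂))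
    (by rw [← add_div, div_self hρ.ne'])
  simp only [smul_eq_mul] at h
  have harg : ρ₁ / (ρ₁ + ρ₂) * (a / ρ₁) + ρ₂ / (ρ₁ + ρ₂) * (b / ρ₂) = (a + b) / (ρ₁ + ρ₂) := by
    field_simp
  rw [harg] at h
  exact h

lemma minkowski_tsum (hp : 1 ≤ p) (f g : ℕ → ℝ≥0∞) :
    (∑' k, (f k + g k) ^ p) ^ (1/p) ≤ (∑' k, f k ^ p) ^ (1/p) + (∑' k, g k ^ p) ^ (1/p) := by
  have h := ENNReal.lintegral_Lp_add_le (μ := MeasureTheory.Measure.count)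
    (f := f) (g := g) (measurable_of_countable f).aemeasurable
    (measurable_of_countable g).aemeasurable hp
  simpa [MeasureTheory.lintegral_count, Pi.add_apply] using h

lemma pull_const (hp0 : 0 < p) (c : ℝ≥0∞) (A : ℕ → ℝ≥0∞) :
    (∑' k, (c * A k) ^ p) ^ (1/p) = c * (∑' k, A k ^ p) ^ (1/p) := by
  have h : ∀ k, (c * A k) ^ p = c ^ p * A k ^ p := fun k =>
    ENNReal.mul_rpow_of_nonneg _ _ hp0.le
  simp_rw [h]
  rw [ENNReal.tsum_mul_left, ENNReal.mul_rpow_of_nonneg _ _ (by positivity : (0:ℝ) ≤ 1/p),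
    ← ENNReal.rpow_mul, mul_one_div_cancel hp0.ne', ENNReal.rpow_one]

lemma key (hM : IsOrliczFunction M) (hp : 1 ≤ p) {u v w : ℕ → ℝ}
    (hw : ∀ k, |w k| ≤ |u k| + |v k|) {ρ₁ ρ₂ : ℝ} (h₁ : 0 < ρ₁) (h₂ : 0 < ρ₂) :
    (lpSum M p w (ρ₁ + ρ₂)) ^ (1/p) ≤
      ENNReal.ofReal (ρ₁ / (ρ₁ + ρ₂)) * (lpSum M p u ρ₁) ^ (1/p)
        + ENNReal.ofReal (ρ₂ / (ρ₁ + ρ₂)) * (lpSum M p v ρ₂) ^ (1/p) := by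
  have hp0 : 0 < p := lt_of_lt_of_le one_pos hp
  have hρ : 0 < ρ₁ + ρ₂ := by linarith
  have hlam0 : (0:ℝ) ≤ ρ₁ / (ρ₁ + ρ₂) := by positivity
  have hmu0 : (0:ℝ) ≤ ρ₂ / (ρ₁ + ρ₂) := by positivity
  have step1 : lpSum M p w (ρ₁ + ρ₂) ≤
      ∑' k, (ENNReal.ofReal (ρ₁ / (ρ₁ + ρ₂)) * ENNReal.ofReal (M (|u k| / ρ₁))
        + ENNReal.ofReal (ρ₂ / (ρ₁ + ρ₂)) * ENNReal.ofReal (M (|v k| / ρ₂))) ^ p := by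
    refine ENNReal.tsum_le_tsum fun k => ?_
    refine ENNReal.rpow_le_rpow ?_ hp0.le
    have hm1 : M (|w k| / (ρ₁ + ρ₂)) ≤ M ((|u k| + |v k|) / (ρ₁ + ρ₂)) := by
      refine hM.2.1 (Set.mem_Ici.2 (by positivity)) (Set.mem_Ici.2 (by positivity)) ?_
      have := hw k
      gcongr
    have hm2 := conv_term hM (abs_nonneg (u k)) (abs_nonneg (v k)) h₁ h₂
    calc ENNReal.ofReal (M (|w k| / (ρ₁ + ρ₂)))
        ≤ ENNReal.ofReal (ρ₁ / (ρ₁ + ρ₂) * M (|u k| / ρ₁) + ρ₂ / (ρ₁ + ρ₂) * M (|v k| / ρ₂)) :=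
          ENNReal.ofReal_le_ofReal (le_trans hm1 hm2)
      _ = _ := by
          rw [ENNReal.ofReal_add (mul_nonneg hlam0 (M_nonneg hM (by positivity)))
            (mul_nonneg hmu0 (M_nonneg hM (by positivity))),
            ENNReal.ofReal_mul hlam0, ENNReal.ofReal_mul hmu0]
  have step2 := ENNReal.rpow_le_rpow step1 (by positivity : (0:ℝ) ≤ 1/p)
  refine step2.trans ?_
  refine (minkowski_tsum hp (fun k => ENNReal.ofReal (ρ₁ / (ρ₁ + ρ₂)) *
      ENNReal.ofReal (M (|u k| / ρ₁)))
    (fun k => ENNReal.ofReal (ρ₂ / (ρ₁ + ρ₂)) * ENNReal.ofReal (M (|v k| / ρ₂)))).trans ?_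
  have e1 := pull_const hp0 (ENNReal.ofReal (ρ₁ / (ρ₁ + ρ₂)))
    (fun k => ENNReal.ofReal (M (|u k| / ρ₁)))
  have e2 := pull_const hp0 (ENNReal.ofReal (ρ₂ / (ρ₁ + ρ₂)))
    (fun k => ENNReal.ofReal (M (|v k| / ρ₂)))
  exact le_of_eq (by rw [e1, e2]; rfl)

lemma S_add (hM : IsOrliczFunction M) (hp : 1 ≤ p) {u v w : ℕ → ℝ}
    (hw : ∀ k, |w k| ≤ |u k| + |v k|) {ρ₁ ρ₂ : ℝ}
    (hρ₁ : ρ₁ ∈ S M p u) (hρ₂ : ρ₂ ∈ S M p v) : ρ₁ + ρ₂ ∈ S M p w := by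
  have hp0 : 0 < p := lt_of_lt_of_le one_pos hp
  obtain ⟨h₁, hs₁⟩ := (mem_S_iff hp0).1 hρ₁
  obtain ⟨h₂, hs₂⟩ := (mem_S_iff hp0).1 hρ₂
  have hρ : 0 < ρ₁ + ρ₂ := by linarith
  refine (mem_S_iff hp0).2 ⟨hρ, ?_⟩
  have h := key hM hp hw h₁ h₂
  have hs₁' : (lpSum M p u ρ₁) ^ (1/p) ≤ 1 := by
    rw [one_div, ENNReal.rpow_inv_le_iff hp0, ENNReal.one_rpow]; exact hs₁
  have hs₂' : (lpSum M p v ρ₂) ^ (1/p) ≤ 1 := by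
    rw [one_div, ENNReal.rpow_inv_le_iff hp0, ENNReal.one_rpow]; exact hs₂
  have hle : (lpSum M p w (ρ₁ + ρ₂)) ^ (1/p) ≤
      ENNReal.ofReal (ρ₁ / (ρ₁ + ρ₂)) + ENNReal.ofReal (ρ₂ / (ρ₁ + ρ₂)) := by
    refine h.trans ?_
    calc ENNReal.ofReal (ρ₁ / (ρ₁ + ρ₂)) * (lpSum M p u ρ₁) ^ (1/p)
          + ENNReal.ofReal (ρ₂ / (ρ₁ + ρ₂)) * (lpSum M p v ρ₂) ^ (1/p)
        ≤ ENNReal.ofReal (ρ₁ / (ρ₁ + ρ₂)) * 1 + ENNReal.ofReal (ρ₂ / (ρ₁ + ρ₂)) * 1 :=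
          add_le_add (mul_le_mul_right hs₁' _) (mul_le_mul_right hs₂' _)
      _ = _ := by rw [mul_one, mul_one]
  have hsum1 : ENNReal.ofReal (ρ₁ / (ρ₁ + ρ₂)) + ENNReal.ofReal (ρ₂ / (ρ₁ + ρ₂)) = 1 := by
    rw [← ENNReal.ofReal_add (by positivity) (by positivity), ← add_div,
      div_self hρ.ne', ENNReal.ofReal_one]
  rw [hsum1] at hle
  rwa [one_div, ENNReal.rpow_inv_le_iff hp0, ENNReal.one_rpow] at hle

lemma lpSum_add_lt_top (hM : IsOrliczFunction M) (hp : 1 ≤ p) {u v w : ℕ → ℝ}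
    (hw : ∀ k, |w k| ≤ |u k| + |v k|) {ρ₁ ρ₂ : ℝ} (h₁ : 0 < ρ₁) (h₂ : 0 < ρ₂)
    (f₁ : lpSum M p u ρ₁ < ⊤) (f₂ : lpSum M p v ρ₂ < ⊤) :
    lpSum M p w (ρ₁ + ρ₂) < ⊤ := by
  have hp0 : 0 < p := lt_of_lt_of_le one_pos hp
  have h := key hM hp hw h₁ h₂
  have hrhs : ENNReal.ofReal (ρ₁ / (ρ₁ + ρ₂)) * (lpSum M p u ρ₁) ^ (1/p)
      + ENNReal.ofReal (ρ₂ / (ρ₁ + ρ₂)) * (lpSum M p v ρ₂) ^ (1/p) < ⊤ := by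
    refine ENNReal.add_lt_top.2 ⟨ENNReal.mul_lt_top ENNReal.ofReal_lt_top ?_,
      ENNReal.mul_lt_top ENNReal.ofReal_lt_top ?_⟩
    · exact ENNReal.rpow_lt_top_of_nonneg (by positivity) f₁.ne
    · exact ENNReal.rpow_lt_top_of_nonneg (by positivity) f₂.ne
  have heq : ((lpSum M p w (ρ₁ + ρ₂)) ^ (1/p)) ^ p = lpSum M p w (ρ₁ + ρ₂) := by
    rw [← ENNReal.rpow_mul, one_div_mul_cancel hp0.ne', ENNReal.rpow_one]
  rw [← heq]
  exact ENNReal.rpow_lt_top_of_nonneg hp0.le (ne_of_lt (lt_of_le_of_lt h hrhs))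

lemma S_nonempty (hM : IsOrliczFunction M) (hp : 1 ≤ p) {u : ℕ → ℝ} {ρ₀ : ℝ} (h₀ : 0 < ρ₀)
    (hfin : lpSum M p u ρ₀ < ⊤) : (S M p u).Nonempty := by
  have hp0 : 0 < p := lt_of_lt_of_le one_pos hp
  have hlim : Tendsto (fun n : ℕ => lpSum M p u (ρ₀ + n)) atTop (𝓝 0) := by
    have h := MeasureTheory.tendsto_lintegral_of_dominated_convergence
      (μ := MeasureTheory.Measure.count)
      (F := fun (n : ℕ) (k : ℕ) => ENNReal.ofReal (M (|u k| / (ρ₀ + n))) ^ p)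
      (f := fun _ => 0) (bound := fun k => ENNReal.ofReal (M (|u k| / ρ₀)) ^ p)
      (fun n => measurable_of_countable _) ?_ ?_ ?_
    · simpa [MeasureTheory.lintegral_count, lpSum] using h
    · intro n
      refine Filter.Eventually.of_forall fun k => ?_
      refine ENNReal.rpow_le_rpow (ENNReal.ofReal_le_ofReal ?_) hp0.le
      have hρn : ρ₀ ≤ ρ₀ + (n:ℝ) := le_add_of_nonneg_right (Nat.cast_nonneg n)
      have harg : |u k| / (ρ₀ + n) ≤ |u k| / ρ₀ := by gcongr
      exact hM.2.1 (Set.mem_Ici.2 (by positivity)) (Set.mem_Ici.2 (by positivity)) harg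
    · rw [MeasureTheory.lintegral_count]; exact hfin.ne
    · refine Filter.Eventually.of_forall fun k => ?_
      have hden : Tendsto (fun n : ℕ => ρ₀ + (n:ℝ)) atTop atTop :=
        tendsto_atTop_add_const_left _ ρ₀ tendsto_natCast_atTop_atTop
      have harg : Tendsto (fun n : ℕ => |u k| / (ρ₀ + (n:ℝ))) atTop (𝓝 0) :=
        hden.const_div_atTop _
      have hc : ContinuousWithinAt M (Set.Ici 0) 0 := hM.1 0 (Set.mem_Ici.2 le_rfl)
      have hMt : Tendsto (fun n : ℕ => M (|u k| / (ρ₀ + (n:ℝ)))) atTop (𝓝 0) := by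
        have h2 := hc.tendsto.comp (tendsto_nhdsWithin_iff.2
          ⟨harg, Filter.Eventually.of_forall fun n => Set.mem_Ici.2 (by positivity)⟩)
        simpa [hM.2.2.2.1, Function.comp_def] using h2
      have h3 : Tendsto (fun n : ℕ => ENNReal.ofReal (M (|u k| / (ρ₀ + (n:ℝ)))))
          atTop (𝓝 0) := by
        have := (ENNReal.continuous_ofReal.tendsto 0).comp hMt
        simpa [Function.comp_def] using this
      have h4 := ((ENNReal.continuous_rpow_const (y := p)).tendsto 0).comp h3
      simpa [Function.comp_def, ENNReal.zero_rpow_of_pos hp0] using h4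
  have hev : ∀ᶠ n : ℕ in atTop, lpSum M p u (ρ₀ + n) < 1 :=
    hlim.eventually_lt_const zero_lt_one
  obtain ⟨n, hn⟩ := hev.exists
  exact ⟨ρ₀ + n, (mem_S_iff hp0).2 ⟨by positivity, hn.le⟩⟩

lemma exists_d (hM : IsOrliczFunction M) : ∃ d : ℝ, 0 < d ∧ 1 < M d := by
  obtain ⟨d, hd2, hd0⟩ := ((hM.2.2.2.2.2.eventually_ge_atTop 2).and
    (Filter.eventually_gt_atTop 0)).exists
  exact ⟨d, hd0, by linarith⟩

lemma abs_le_of_mem_S (hM : IsOrliczFunction M) (hp0 : 0 < p) {d : ℝ} (hd0 : 0 < d)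
    (hd : 1 < M d) {u : ℕ → ℝ} {ρ : ℝ} (hρ : ρ ∈ S M p u) (k : ℕ) : |u k| ≤ d * ρ := by
  obtain ⟨hρ0, hsum⟩ := (mem_S_iff hp0).1 hρ
  have hterm : ENNReal.ofReal (M (|u k| / ρ)) ^ p ≤ 1 := le_trans (ENNReal.le_tsum k) hsum
  have h1 : ENNReal.ofReal (M (|u k| / ρ)) ≤ 1 := by
    have h2 := ENNReal.rpow_le_rpow hterm (by positivity : (0:ℝ) ≤ 1/p)
    rwa [← ENNReal.rpow_mul, mul_one_div_cancel hp0.ne', ENNReal.rpow_one,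
      ENNReal.one_rpow] at h2
  have hMle : M (|u k| / ρ) ≤ 1 := ENNReal.ofReal_le_one.1 h1
  by_contra h
  push_neg at h
  have hdlt : d ≤ |u k| / ρ := by
    rw [le_div_iff₀ hρ0]
    nlinarith [hρ0, h]
  have := hM.2.1 (Set.mem_Ici.2 hd0.le) (Set.mem_Ici.2 (by positivity)) hdlt
  linarith

lemma lpSum_sub_comm (x y : ℕ → ℝ) (ρ : ℝ) :
    lpSum M p (fun k => x k - y k) ρ = lpSum M p (fun k => y k - x k) ρ := by
  unfold lpSum
  exact tsum_congr fun k => by rw [abs_sub_comm]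

lemma S_diff_nonempty (hM : IsOrliczFunction M) (hp : 1 ≤ p) {x y : ℕ → ℝ}
    (hx : x ∈ lpM M p) (hy : y ∈ lpM M p) :
    (S M p (fun k => x k - y k)).Nonempty := by
  obtain ⟨ρ₁, h₁, f₁⟩ := hx
  obtain ⟨ρ₂, h₂, f₂⟩ := hy
  have hw : ∀ k, |x k - y k| ≤ |x k| + |y k| := fun k => abs_sub (x k) (y k)
  exact S_nonempty hM hp (by linarith) (lpSum_add_lt_top hM hp hw h₁ h₂ f₁ f₂)

lemma S_self (hM : IsOrliczFunction M) (hp0 : 0 < p) (x : ℕ → ℝ) :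
    S M p (fun k => x k - x k) = Set.Ioi 0 := by
  ext ρ
  have hzero : lpSum M p (fun k => x k - x k) ρ = 0 := by
    unfold lpSum
    simp [sub_self, hM.2.2.2.1, ENNReal.zero_rpow_of_pos hp0]
  rw [mem_S_iff hp0, hzero, Set.mem_Ioi]
  simp

end LpCompleteAux

open LpCompleteAux Filter Topology in
theorem lp_complete_metric (M : ℝ → ℝ) (hM : IsOrliczFunction M) (p : ℝ) (hp : 1 ≤ p) :
    ∃ inst : MetricSpace (lpM M p),
      (∀ a b : lpM M p, @dist _ inst.toDist a b = eta3 M p a.1 b.1) ∧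
        @CompleteSpace _ inst.toUniformSpace := by
  classical
  have hp0 : 0 < p := lt_of_lt_of_le one_pos hp
  obtain ⟨d, hd0, hd1⟩ := exists_d hM
  have hself : ∀ a : lpM M p, eta3 M p a.1 a.1 = 0 := by
    intro a
    rw [eta3_eq, S_self hM hp0, csInf_Ioi]
  have hcomm : ∀ a b : lpM M p, eta3 M p a.1 b.1 = eta3 M p b.1 a.1 := by
    intro a b
    rw [eta3_eq, eta3_eq]
    congr 1
    ext ρ
    simp only [S, Set.mem_setOf_eq, lpSum_sub_comm a.1 b.1 ρ]
  have htri : ∀ a b c : lpM M p, eta3 M p a.1 c.1 ≤ eta3 M p a.1 b.1 + eta3 M p b.1 c.1 := by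
    intro a b c
    rw [eta3_eq, eta3_eq, eta3_eq]
    have hne_ab := S_diff_nonempty hM hp a.2 b.2
    have hne_bc := S_diff_nonempty hM hp b.2 c.2
    have hw : ∀ k, |a.1 k - c.1 k| ≤ |a.1 k - b.1 k| + |b.1 k - c.1 k| := fun k =>
      abs_sub_le (a.1 k) (b.1 k) (c.1 k)
    have hadd : ∀ ρ₁ ∈ S M p (fun k => a.1 k - b.1 k), ∀ ρ₂ ∈ S M p (fun k => b.1 k - c.1 k),
        sInf (S M p (fun k => a.1 k - c.1 k)) ≤ ρ₁ + ρ₂ := fun ρ₁ h₁ ρ₂ h₂ =>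
      csInf_le (S_bddBelow _) (S_add hM hp hw h₁ h₂)
    have h1 : sInf (S M p (fun k => a.1 k - c.1 k)) - sInf (S M p (fun k => b.1 k - c.1 k))
        ≤ sInf (S M p (fun k => a.1 k - b.1 k)) := by
      refine le_csInf hne_ab fun ρ₁ h₁ => ?_
      have h2 : sInf (S M p (fun k => a.1 k - c.1 k)) - ρ₁
          ≤ sInf (S M p (fun k => b.1 k - c.1 k)) := by
        refine le_csInf hne_bc fun ρ₂ h₂ => ?_
        have := hadd ρ₁ h₁ ρ₂ h₂
        linarith
      linarith
    linarith
  have heq0 : ∀ a b : lpM M p, eta3 M p a.1 b.1 = 0 → a = b := by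
    intro a b h
    by_contra hne
    have hfn : a.1 ≠ b.1 := fun hh => hne (Subtype.ext hh)
    obtain ⟨k, hk⟩ := Function.ne_iff.1 hfn
    have hc : 0 < |a.1 k - b.1 k| := abs_pos.2 (sub_ne_zero.2 hk)
    have hlb : ∀ ρ ∈ S M p (fun j => a.1 j - b.1 j), |a.1 k - b.1 k| / d ≤ ρ := by
      intro ρ hρ
      have hb := abs_le_of_mem_S hM hp0 hd0 hd1 hρ k
      rw [div_le_iff₀ hd0]
      nlinarith
    have hge : |a.1 k - b.1 k| / d ≤ eta3 M p a.1 b.1 := by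
      rw [eta3_eq]
      exact le_csInf (S_diff_nonempty hM hp a.2 b.2) hlb
    rw [h] at hge
    have : 0 < |a.1 k - b.1 k| / d := by positivity
    linarith
  letI inst : MetricSpace (lpM M p) :=
    { dist := fun a b => eta3 M p a.1 b.1
      dist_self := hself
      dist_comm := hcomm
      dist_triangle := htri
      eq_of_dist_eq_zero := fun {a b} h => heq0 a b h }
  have hdist : ∀ a b : lpM M p, dist a b = eta3 M p a.1 b.1 := fun a b => rfl
  refine ⟨inst, hdist, ?_⟩
  apply Metric.complete_of_cauchySeq_tendsto
  intro u hu
  rw [Metric.cauchySeq_iff] at hu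
  have stepA : ∀ (a b : lpM M p) (ε : ℝ), 0 < ε → dist a b < ε →
      lpSum M p (fun k => a.1 k - b.1 k) ε ≤ 1 := by
    intro a b ε hε h
    rw [hdist, eta3_eq] at h
    obtain ⟨ρ, hρS, hρε⟩ := exists_lt_of_csInf_lt (S_diff_nonempty hM hp a.2 b.2) h
    obtain ⟨hρ0, hρ1⟩ := (mem_S_iff hp0).1 hρS
    exact le_trans (lpSum_mono hM hp0 _ hρ0 hρε.le) hρ1
  have hptw : ∀ k, ∃ l : ℝ, Tendsto (fun n => (u n).1 k) atTop (𝓝 l) := by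
    intro k
    have hcs : CauchySeq (fun n => (u n).1 k) := by
      rw [Metric.cauchySeq_iff]
      intro ε hε
      obtain ⟨N, hN⟩ := hu (ε / (2 * d)) (by positivity)
      refine ⟨N, fun m hm n hn => ?_⟩
      have h1 := stepA (u m) (u n) _ (by positivity) (hN m hm n hn)
      have h2 : (ε / (2 * d)) ∈ S M p (fun j => (u m).1 j - (u n).1 j) :=
        (mem_S_iff hp0).2 ⟨by positivity, h1⟩
      have h3 := abs_le_of_mem_S hM hp0 hd0 hd1 h2 k
      rw [Real.dist_eq]
      have hde : d * (ε / (2 * d)) = ε / 2 := by field_simp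
      calc |(u m).1 k - (u n).1 k| ≤ d * (ε / (2 * d)) := h3
        _ = ε / 2 := hde
        _ < ε := by linarith
    exact cauchySeq_tendsto_of_complete hcs
  choose x hx using hptw
  have stepC : ∀ ε : ℝ, 0 < ε → ∃ N, ∀ n ≥ N,
      lpSum M p (fun k => (u n).1 k - x k) ε ≤ 1 := by
    intro ε hε
    obtain ⟨N, hN⟩ := hu ε hε
    refine ⟨N, fun n hn => ?_⟩
    unfold lpSum
    rw [ENNReal.tsum_eq_iSup_sum]
    refine iSup_le fun s => ?_
    have hterm : ∀ k ∈ s,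
        Tendsto (fun m => ENNReal.ofReal (M (|(u n).1 k - (u m).1 k| / ε)) ^ p)
          atTop (𝓝 (ENNReal.ofReal (M (|(u n).1 k - x k| / ε)) ^ p)) := by
      intro k _
      have h1 : Tendsto (fun m => |(u n).1 k - (u m).1 k| / ε) atTop
          (𝓝 (|(u n).1 k - x k| / ε)) :=
        ((tendsto_const_nhds.sub (hx k)).abs).div_const ε
      have hc : ContinuousWithinAt M (Set.Ici 0) (|(u n).1 k - x k| / ε) :=
        hM.1 _ (Set.mem_Ici.2 (by positivity))
      have h2 : Tendsto (fun m => M (|(u n).1 k - (u m).1 k| / ε)) atTop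
          (𝓝 (M (|(u n).1 k - x k| / ε))) := by
        have h2' := hc.tendsto.comp (tendsto_nhdsWithin_iff.2
          ⟨h1, Filter.Eventually.of_forall fun m => Set.mem_Ici.2 (by positivity)⟩)
        simpa [Function.comp_def] using h2'
      have h3 := (ENNReal.continuous_ofReal.tendsto _).comp h2
      have h4 := ((ENNReal.continuous_rpow_const (y := p)).tendsto _).comp h3
      simpa [Function.comp_def] using h4
    have hsum := tendsto_finset_sum s hterm
    refine le_of_tendsto hsum ?_
    filter_upwards [Filter.eventually_ge_atTop N] with m hm
    have h1 := stepA (u n) (u m) ε hε (hN n hn m hm)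
    calc ∑ k ∈ s, ENNReal.ofReal (M (|(u n).1 k - (u m).1 k| / ε)) ^ p
        ≤ lpSum M p (fun k => (u n).1 k - (u m).1 k) ε := ENNReal.sum_le_tsum s
      _ ≤ 1 := h1
  obtain ⟨N₁, hN₁⟩ := stepC 1 one_pos
  have hxmem : x ∈ lpM M p := by
    obtain ⟨ρ₀, hρ₀, hfin₀⟩ := (u N₁).2
    have hw : ∀ k, |x k| ≤ |x k - (u N₁).1 k| + |(u N₁).1 k| := by
      intro k
      calc |x k| = |x k - (u N₁).1 k + (u N₁).1 k| := by congr 1; ring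
        _ ≤ |x k - (u N₁).1 k| + |(u N₁).1 k| := abs_add_le _ _
    have hfin1 : lpSum M p (fun k => x k - (u N₁).1 k) 1 < ⊤ := by
      rw [lpSum_sub_comm]
      exact lt_of_le_of_lt (hN₁ N₁ le_rfl) ENNReal.one_lt_top
    exact ⟨1 + ρ₀, by linarith, lpSum_add_lt_top hM hp hw one_pos hρ₀ hfin1 hfin₀⟩
  refine ⟨⟨x, hxmem⟩, ?_⟩
  rw [Metric.tendsto_atTop]
  intro ε hε
  obtain ⟨N, hN⟩ := stepC (ε / 2) (by positivity)
  refine ⟨N, fun n hn => ?_⟩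
  have hmem : ε / 2 ∈ S M p (fun k => (u n).1 k - x k) :=
    (mem_S_iff hp0).2 ⟨by positivity, hN n hn⟩
  have hle : dist (u n) (⟨x, hxmem⟩ : lpM M p) ≤ ε / 2 := by
    rw [hdist, eta3_eq]
    exact csInf_le (S_bddBelow _) hmem
  linarith
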